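/- Define θ_m(d) = (1/π)·arccos((ℓ(d)² − 1)/(2·ℓ(d)²)) for d > 0. Then: (i) (1/(2π))·arccos((1 − 2ℓ² − ℓ⁴)/(2ℓ⁴)) = (1/π)·arccos((ℓ² − 1)/(2ℓ²)) for ℓ = ℓ(d); (ii) the function d ↦ θ_m(d) is continuous and strictly decreasing on (0,∞), with limit 1/2 as d → 0⁺ and limit 1/3 as d → +∞; (iii) θ_m(d) = 3/7 if and only if d = d₀, θ_m(d) < 3/7 if and only if d > d₀, and θ_m(d) > 3/7 if and only if d < d₀; (iv) ℓ(d₀) = 1/√(1 − 2·sin(π/14)). -/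

import Mathlib

set_option maxHeartbeats 1000000


open Real

noncomputable def d₀ : ℝ := 2 * Real.sin (π / 14) / (1 - 2 * Real.sin (π / 14)) ^ ((3 : ℝ) / 2)

/-- properties of `θ_m(d) = (1/π)·arccos((ℓ(d)² − 1)/(2ℓ(d)²))`, where
`ℓ(d)` is the unique positive root of `t³ − t − d = 0`:
(i) the two arccos formulas agree; (ii) `θ_m` is continuous and strictly decreasing on
`(0,∞)` with limits `1/2` at `0⁺` and `1/3` at `+∞`; (iii) `θ_m(d) = 3/7 ↔ d = d₀`,
`θ_m(d) < 3/7 ↔ d > d₀`, `θ_m(d) > 3/7 ↔ d < d₀`; (iv) `ℓ(d₀) = 1/√(1 − 2 sin(π/14))`. -/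
theorem stmt_10 (l : ℝ → ℝ)
    (hl : ∀ d : ℝ, 0 < d → 0 < l d ∧ (l d) ^ 3 - l d - d = 0) :
    (∀ d : ℝ, 0 < d →
      (1 / (2 * π)) * Real.arccos ((1 - 2 * (l d) ^ 2 - (l d) ^ 4) / (2 * (l d) ^ 4)) =
        (1 / π) * Real.arccos (((l d) ^ 2 - 1) / (2 * (l d) ^ 2))) ∧
    ContinuousOn (fun d : ℝ => (1 / π) * Real.arccos (((l d) ^ 2 - 1) / (2 * (l d) ^ 2)))
      (Set.Ioi 0) ∧
    StrictAntiOn (fun d : ℝ => (1 / π) * Real.arccos (((l d) ^ 2 - 1) / (2 * (l d) ^ 2)))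
      (Set.Ioi 0) ∧
    Filter.Tendsto (fun d : ℝ => (1 / π) * Real.arccos (((l d) ^ 2 - 1) / (2 * (l d) ^ 2)))
      (nhdsWithin 0 (Set.Ioi 0)) (nhds (1 / 2)) ∧
    Filter.Tendsto (fun d : ℝ => (1 / π) * Real.arccos (((l d) ^ 2 - 1) / (2 * (l d) ^ 2)))
      Filter.atTop (nhds (1 / 3)) ∧
    (∀ d : ℝ, 0 < d →
      ((1 / π) * Real.arccos (((l d) ^ 2 - 1) / (2 * (l d) ^ 2)) = 3 / 7 ↔ d = d₀) ∧
      ((1 / π) * Real.arccos (((l d) ^ 2 - 1) / (2 * (l d) ^ 2)) < 3 / 7 ↔ d₀ < d) ∧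
      ((1 / π) * Real.arccos (((l d) ^ 2 - 1) / (2 * (l d) ^ 2)) > 3 / 7 ↔ d < d₀)) ∧
    l d₀ = 1 / Real.sqrt (1 - 2 * Real.sin (π / 14)) := by
  have hπ : 0 < π := Real.pi_pos
  -- basic facts about l
  have hl1 : ∀ d : ℝ, 0 < d → 1 < l d := by
    intro d hd
    obtain ⟨h1, h2⟩ := hl d hd
    nlinarith [sq_nonneg (l d), sq_nonneg (l d - 1), sq_nonneg (l d + 1)]
  have heq : ∀ d : ℝ, 0 < d → (l d) ^ 3 - l d = d := by
    intro d hd; have := (hl d hd).2; linarith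
  -- comparison lemma
  have hcmp : ∀ d t : ℝ, 0 < d → 1 < t → (l d < t ↔ d < t ^ 3 - t) := by
    intro d t hd ht
    have h1 := hl1 d hd
    have he := heq d hd
    constructor
    · intro h
      have hq : 0 < t ^ 2 + t * l d + (l d) ^ 2 - 1 := by nlinarith
      nlinarith [mul_pos (sub_pos.2 h) hq]
    · intro h
      by_contra hc
      push_neg at hc
      have hq : 0 ≤ (l d - t) * ((l d) ^ 2 + (l d) * t + t ^ 2 - 1) := by
        apply mul_nonneg (by linarith)
        nlinarith
      nlinarith
  have hmono : ∀ d₁ d₂ : ℝ, 0 < d₁ → 0 < d₂ → d₁ < d₂ → l d₁ < l d₂ := by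
    intro d₁ d₂ h1 h2 h12
    rw [hcmp d₁ (l d₂) h1 (hl1 d₂ h2), heq d₂ h2]
    exact h12
  have hiff : ∀ d₁ d₂ : ℝ, 0 < d₁ → 0 < d₂ → (l d₁ < l d₂ ↔ d₁ < d₂) := by
    intro d₁ d₂ h1 h2
    constructor
    · intro h
      by_contra hc
      push_neg at hc
      rcases eq_or_lt_of_le hc with h' | h'
      · rw [h'] at h; exact lt_irrefl _ h
      · exact absurd (hmono d₂ d₁ h2 h1 h') (not_lt.2 h.le)
    · exact hmono d₁ d₂ h1 h2
  have heiff : ∀ d₁ d₂ : ℝ, 0 < d₁ → 0 < d₂ → (l d₁ = l d₂ ↔ d₁ = d₂) := by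
    intro d₁ d₂ h1 h2
    constructor
    · intro h
      have := heq d₁ h1
      have := heq d₂ h2
      rw [h] at *
      linarith
    · intro h; rw [h]
  -- facts about s = sin (π/14)
  set s : ℝ := Real.sin (π / 14) with hs_def
  have hs0 : 0 < s := Real.sin_pos_of_pos_of_lt_pi (by positivity) (by linarith)
  have hs_half : s < 1 / 2 := by
    have h1 : s < π / 14 := Real.sin_lt (by positivity)
    have h2 : π < 3.15 := Real.pi_lt_d2
    linarith
  have hu : 0 < 1 - 2 * s := by linarith
  have hsq_pos : 0 < Real.sqrt (1 - 2 * s) := Real.sqrt_pos.2 hu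
  have hsq_sq : Real.sqrt (1 - 2 * s) ^ 2 = 1 - 2 * s := Real.sq_sqrt hu.le
  set L₀ : ℝ := 1 / Real.sqrt (1 - 2 * s) with hL₀_def
  have hL₀_pos : 0 < L₀ := by positivity
  have hL₀_gt : 1 < L₀ := by
    rw [hL₀_def, one_lt_div hsq_pos]
    nlinarith
  have hL₀_sq : L₀ ^ 2 = 1 / (1 - 2 * s) := by
    rw [hL₀_def, div_pow, one_pow, hsq_sq]
  have hrpow : (1 - 2 * s) ^ ((3 : ℝ) / 2) = (1 - 2 * s) * Real.sqrt (1 - 2 * s) := by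
    rw [Real.sqrt_eq_rpow, ← Real.rpow_one_add' hu.le (by norm_num)]
    norm_num
  have hL₀_root : L₀ ^ 3 - L₀ = d₀ := by
    unfold d₀
    rw [← hs_def, hrpow, hL₀_def]
    rw [div_pow, one_pow]
    have h3 : Real.sqrt (1 - 2 * s) ^ 3 = (1 - 2 * s) * Real.sqrt (1 - 2 * s) := by
      rw [pow_succ, hsq_sq]
    rw [h3]
    field_simp
    nlinarith [hsq_sq]
  have hd₀_pos : 0 < d₀ := by
    rw [← hL₀_root]
    nlinarith
  have hld₀ : l d₀ = L₀ := by
    have h1 := hl1 d₀ hd₀_pos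
    have he := heq d₀ hd₀_pos
    rcases lt_trichotomy (l d₀) L₀ with h | h | h
    · exfalso
      rw [hcmp d₀ L₀ hd₀_pos hL₀_gt, hL₀_root] at h
      exact lt_irrefl _ h
    · exact h
    · exfalso
      have hq : 0 < (l d₀ - L₀) * ((l d₀) ^ 2 + (l d₀) * L₀ + L₀ ^ 2 - 1) := by
        apply mul_pos (by linarith)
        nlinarith
      nlinarith [hL₀_root]
  -- facts about x d := ((l d)^2 - 1)/(2 (l d)^2)
  have hx : ∀ d : ℝ, 0 < d → 0 ≤ ((l d) ^ 2 - 1) / (2 * (l d) ^ 2) ∧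
      ((l d) ^ 2 - 1) / (2 * (l d) ^ 2) < 1 / 2 := by
    intro d hd
    have h1 := hl1 d hd
    constructor
    · apply div_nonneg (by nlinarith) (by positivity)
    · rw [div_lt_iff₀ (by positivity)]
      nlinarith
  have hxmem : ∀ d : ℝ, 0 < d → ((l d) ^ 2 - 1) / (2 * (l d) ^ 2) ∈ Set.Icc (-1 : ℝ) 1 := by
    intro d hd
    obtain ⟨h1, h2⟩ := hx d hd
    exact ⟨by linarith, by linarith⟩
  have hsmem : s ∈ Set.Icc (-1 : ℝ) 1 := ⟨by linarith, by linarith⟩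
  -- arccos s = 3π/7
  have hacs : Real.arccos s = 3 * π / 7 := by
    have h1 : s = Real.cos (3 * π / 7) := by
      rw [hs_def, ← Real.cos_pi_div_two_sub]
      congr 1
      ring
    rw [h1, Real.arccos_cos (by positivity) (by linarith)]
  -- part (i)
  have part1 : ∀ d : ℝ, 0 < d →
      (1 / (2 * π)) * Real.arccos ((1 - 2 * (l d) ^ 2 - (l d) ^ 4) / (2 * (l d) ^ 4)) =
        (1 / π) * Real.arccos (((l d) ^ 2 - 1) / (2 * (l d) ^ 2)) := by
    intro d hd
    have h1 := hl1 d hd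
    obtain ⟨hx0, hxh⟩ := hx d hd
    set x := ((l d) ^ 2 - 1) / (2 * (l d) ^ 2) with hx_eq
    set α := Real.arccos x with hα_eq
    have hα0 : 0 ≤ α := Real.arccos_nonneg x
    have hαh : α ≤ π / 2 := Real.arccos_le_pi_div_two.2 hx0
    have hcosα : Real.cos α = x := Real.cos_arccos (by linarith) (by linarith)
    have hkey : (1 - 2 * (l d) ^ 2 - (l d) ^ 4) / (2 * (l d) ^ 4) = Real.cos (2 * α) := by
      rw [Real.cos_two_mul, hcosα, hx_eq]
      have hL : (l d) ≠ 0 := by positivity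
      field_simp
      ring
    rw [hkey, Real.arccos_cos (by linarith) (by linarith)]
    field_simp
  -- tendsto of l within each point
  have hlc : ∀ d : ℝ, 0 < d →
      Filter.Tendsto l (nhdsWithin d (Set.Ioi 0)) (nhds (l d)) := by
    intro d hd
    have hLd := hl1 d hd
    rw [tendsto_order]
    constructor
    · intro a ha
      set c := (max a 1 + l d) / 2 with hc_def
      have hmax : max a 1 < l d := max_lt ha hLd
      have hc1 : 1 < c := by
        have := le_max_right a 1
        rw [hc_def]; linarith
      have hca : a < c := by
        have := le_max_left a 1
        rw [hc_def]; linarith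
      have hcL : c < l d := by rw [hc_def]; linarith
      have hkey : c ^ 3 - c < d := by
        rw [← heq d hd]
        have hq : 0 < (l d - c) * ((l d) ^ 2 + (l d) * c + c ^ 2 - 1) := by
          apply mul_pos (by linarith)
          nlinarith
        nlinarith
      filter_upwards [self_mem_nhdsWithin,
        nhdsWithin_le_nhds (Ioi_mem_nhds hkey)] with x hx0 hxc
      have : ¬ l x < c := by
        rw [hcmp x c hx0 hc1]
        exact not_lt.2 (le_of_lt hxc)
      linarith [not_lt.1 this]
    · intro a ha
      have ha1 : 1 < a := lt_trans hLd ha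
      have hkey : d < a ^ 3 - a := by
        rw [← heq d hd]
        have hq : 0 < (a - l d) * (a ^ 2 + a * l d + (l d) ^ 2 - 1) := by
          apply mul_pos (by linarith)
          nlinarith
        nlinarith
      filter_upwards [self_mem_nhdsWithin,
        nhdsWithin_le_nhds (Iio_mem_nhds hkey)] with x hx0 hxa
      exact (hcmp x a hx0 ha1).2 hxa
  -- continuity of the outer function
  have hF : ∀ y : ℝ, y ≠ 0 →
      ContinuousAt (fun y : ℝ => (1 / π) * Real.arccos ((y ^ 2 - 1) / (2 * y ^ 2))) y := by
    intro y hy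
    apply ContinuousAt.mul continuousAt_const
    apply Real.continuous_arccos.continuousAt.comp
    exact ContinuousAt.div (by fun_prop) (by fun_prop) (by positivity)
  -- continuity
  have part2 : ContinuousOn (fun d : ℝ => (1 / π) * Real.arccos (((l d) ^ 2 - 1) / (2 * (l d) ^ 2)))
      (Set.Ioi 0) := by
    intro d hd
    have hd' : (0 : ℝ) < d := hd
    have h1 : (l d) ≠ 0 := by have := hl1 d hd'; linarith
    exact ((hF (l d) h1).tendsto.comp (hlc d hd') : _)
  -- strict anti
  have part3 : StrictAntiOn (fun d : ℝ => (1 / π) * Real.arccos (((l d) ^ 2 - 1) / (2 * (l d) ^ 2)))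
      (Set.Ioi 0) := by
    intro d₁ h1 d₂ h2 h12
    have h1' : (0 : ℝ) < d₁ := h1
    have h2' : (0 : ℝ) < d₂ := h2
    have hL12 : l d₁ < l d₂ := hmono d₁ d₂ h1' h2' h12
    have hL1 := hl1 d₁ h1'
    have hL2 := hl1 d₂ h2'
    have hxlt : ((l d₁) ^ 2 - 1) / (2 * (l d₁) ^ 2) < ((l d₂) ^ 2 - 1) / (2 * (l d₂) ^ 2) := by
      rw [div_lt_div_iff₀ (by positivity) (by positivity)]
      nlinarith
    have := Real.strictAntiOn_arccos (hxmem d₁ h1') (hxmem d₂ h2') hxlt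
    exact mul_lt_mul_of_pos_left this (by positivity)
  -- limit at 0⁺
  have hl0 : Filter.Tendsto l (nhdsWithin 0 (Set.Ioi 0)) (nhds 1) := by
    rw [tendsto_order]
    constructor
    · intro a ha
      filter_upwards [self_mem_nhdsWithin] with d hd
      exact lt_trans ha (hl1 d hd)
    · intro a ha
      have hfa : (0 : ℝ) < a ^ 3 - a := by
        nlinarith [mul_pos (mul_pos (sub_pos.2 ha) (by linarith : (0:ℝ) < a))
          (by linarith : (0:ℝ) < a + 1)]
      filter_upwards [self_mem_nhdsWithin,
        nhdsWithin_le_nhds (Iio_mem_nhds hfa)] with d hd hda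
      exact (hcmp d a hd ha).2 hda
  have part4 : Filter.Tendsto (fun d : ℝ => (1 / π) * Real.arccos (((l d) ^ 2 - 1) / (2 * (l d) ^ 2)))
      (nhdsWithin 0 (Set.Ioi 0)) (nhds (1 / 2)) := by
    have h1 := (hF 1 one_ne_zero).tendsto.comp hl0
    have h2 : (1 / π) * Real.arccos (((1 : ℝ) ^ 2 - 1) / (2 * (1 : ℝ) ^ 2)) = 1 / 2 := by
      rw [show ((1 : ℝ) ^ 2 - 1) / (2 * (1 : ℝ) ^ 2) = 0 by norm_num, Real.arccos_zero]
      field_simp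
    rw [h2] at h1
    exact h1
  -- limit at +∞
  have hltop : Filter.Tendsto l Filter.atTop Filter.atTop := by
    rw [Filter.tendsto_atTop]
    intro b
    set c := max b 2 with hc_def
    have hc1 : (1 : ℝ) < c := lt_of_lt_of_le one_lt_two (le_max_right _ _)
    filter_upwards [Filter.eventually_ge_atTop (max (c ^ 3 - c) 1)] with d hd
    have hd0 : (0 : ℝ) < d := lt_of_lt_of_le one_pos (le_trans (le_max_right _ _) hd)
    have hnl : ¬ l d < c := by
      rw [hcmp d c hd0 hc1]
      push_neg
      exact le_trans (le_max_left _ _) hd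
    exact le_trans (le_max_left b 2) (not_lt.1 hnl)
  have hg : Filter.Tendsto (fun x : ℝ => (x ^ 2 - 1) / (2 * x ^ 2)) Filter.atTop (nhds (1 / 2)) := by
    have h1 : Filter.Tendsto (fun x : ℝ => 1 / 2 - 1 / (2 * x ^ 2)) Filter.atTop
        (nhds (1 / 2 - 0)) := by
      apply Filter.Tendsto.sub tendsto_const_nhds
      apply Filter.Tendsto.div_atTop tendsto_const_nhds
      apply Filter.Tendsto.const_mul_atTop two_pos
      exact Filter.tendsto_pow_atTop (by norm_num)
    rw [sub_zero] at h1
    apply h1.congr'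
    filter_upwards [Filter.eventually_ge_atTop (1 : ℝ)] with x hx
    have hx0 : x ≠ 0 := by linarith
    field_simp
  have part5 : Filter.Tendsto (fun d : ℝ => (1 / π) * Real.arccos (((l d) ^ 2 - 1) / (2 * (l d) ^ 2)))
      Filter.atTop (nhds (1 / 3)) := by
    have h1 : Filter.Tendsto (fun d : ℝ => Real.arccos (((l d) ^ 2 - 1) / (2 * (l d) ^ 2)))
        Filter.atTop (nhds (Real.arccos (1 / 2))) :=
      (Real.continuous_arccos.tendsto _).comp (hg.comp hltop)
    have h2 : Real.arccos (1 / 2) = π / 3 := by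
      rw [← Real.cos_pi_div_three, Real.arccos_cos (by positivity) (by linarith)]
    rw [h2] at h1
    have h3 := h1.const_mul (1 / π)
    have h4 : (1 / π) * (π / 3) = 1 / 3 := by field_simp
    rw [h4] at h3
    exact h3
  -- part (iii)
  have part6 : ∀ d : ℝ, 0 < d →
      ((1 / π) * Real.arccos (((l d) ^ 2 - 1) / (2 * (l d) ^ 2)) = 3 / 7 ↔ d = d₀) ∧
      ((1 / π) * Real.arccos (((l d) ^ 2 - 1) / (2 * (l d) ^ 2)) < 3 / 7 ↔ d₀ < d) ∧
      ((1 / π) * Real.arccos (((l d) ^ 2 - 1) / (2 * (l d) ^ 2)) > 3 / 7 ↔ d < d₀) := by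
    intro d hd
    have hL := hl1 d hd
    set x := ((l d) ^ 2 - 1) / (2 * (l d) ^ 2) with hx_eq
    obtain ⟨hx0, hxh⟩ := hx d hd
    have hxm := hxmem d hd
    -- x vs s ↔ l d vs L₀
    have hL₀_sq' : L₀ ^ 2 * (1 - 2 * s) = 1 := by
      rw [hL₀_sq]
      field_simp
    have hlt1 : s < x ↔ L₀ < l d := by
      rw [hx_eq, lt_div_iff₀ (by positivity)]
      constructor
      · intro h
        have hL2 : L₀ ^ 2 < (l d) ^ 2 := by nlinarith [hL₀_sq', hu]
        nlinarith [hL2, (by positivity : (0:ℝ) < l d + L₀)]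
      · intro h
        have hL2 : L₀ ^ 2 < (l d) ^ 2 := by
          nlinarith [(by positivity : (0:ℝ) < l d + L₀)]
        nlinarith [hL₀_sq', hu, mul_pos (sub_pos.2 hL2) hu]
    have hlt2 : x < s ↔ l d < L₀ := by
      rw [hx_eq, div_lt_iff₀ (by positivity)]
      constructor
      · intro h
        have hL2 : (l d) ^ 2 < L₀ ^ 2 := by nlinarith [hL₀_sq', hu]
        nlinarith [hL2, (by positivity : (0:ℝ) < l d + L₀)]
      · intro h
        have hL2 : (l d) ^ 2 < L₀ ^ 2 := by
          nlinarith [(by positivity : (0:ℝ) < l d + L₀)]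
        nlinarith [hL₀_sq', hu, mul_pos (sub_pos.2 hL2) hu]
    have heq1 : x = s ↔ l d = L₀ := by
      constructor
      · intro h
        rcases lt_trichotomy (l d) L₀ with h' | h' | h'
        · exact absurd (hlt2.2 h') (by rw [h]; exact lt_irrefl s)
        · exact h'
        · exact absurd (hlt1.2 h') (by rw [h]; exact lt_irrefl s)
      · intro h
        rcases lt_trichotomy x s with h' | h' | h'
        · exact absurd (hlt2.1 h') (by rw [h]; exact lt_irrefl L₀)
        · exact h'
        · exact absurd (hlt1.1 h') (by rw [h]; exact lt_irrefl L₀)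
    -- l d vs L₀ ↔ d vs d₀
    have hdlt1 : L₀ < l d ↔ d₀ < d := by rw [← hld₀]; exact hiff d₀ d hd₀_pos hd
    have hdlt2 : l d < L₀ ↔ d < d₀ := by rw [← hld₀]; exact hiff d d₀ hd hd₀_pos
    have hdeq : l d = L₀ ↔ d = d₀ := by
      rw [← hld₀]
      constructor
      · intro h; exact ((heiff d d₀ hd hd₀_pos).1 h)
      · intro h; rw [h]
    -- arccos x vs 3π/7
    have hπne : (1 / π : ℝ) ≠ 0 := by positivity
    have h37 : (3 : ℝ) / 7 = (1 / π) * (3 * π / 7) := by field_simp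
    have hacc_lt : Real.arccos x < 3 * π / 7 ↔ s < x := by
      rw [← hacs]
      exact Real.strictAntiOn_arccos.lt_iff_gt hxm hsmem
    have hacc_gt : 3 * π / 7 < Real.arccos x ↔ x < s := by
      rw [← hacs]
      exact Real.strictAntiOn_arccos.lt_iff_gt hsmem hxm
    have hacc_eq : Real.arccos x = 3 * π / 7 ↔ x = s := by
      rw [← hacs]
      exact Real.arccos_inj hxm.1 hxm.2 hsmem.1 hsmem.2
    refine ⟨?_, ?_, ?_⟩
    · rw [h37, mul_right_inj' hπne, hacc_eq, heq1, hdeq]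
    · rw [h37, mul_lt_mul_iff_right₀ (by positivity), hacc_lt, hlt1, hdlt1]
    · rw [gt_iff_lt, h37, mul_lt_mul_iff_right₀ (by positivity), hacc_gt, hlt2, hdlt2]
  exact ⟨part1, part2, part3, part4, part5, part6, hld₀⟩
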